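/- Fix α > 1, 0 ≤ k < n - 1, and a boolean function D on {0,1}^n with 0 < |D| < 2^k. Then there exists a unique pair (p,q) of nonnegative reals satisfying p^α|D| + q^α|D^c| = 2^{-(α-1)k} and p|D| + q|D^c| = 1 with p ≥ q, and the maximum of E[D(Y)] over all distributions Y on {0,1}^n with H_α(Y) ≥ k equals p·|D|. -/

import Mathlib

open Finset

/-- Tangent line inequality for `x ^ α`, `α > 1`. -/
lemma stmt5_tangent {α : ℝ} (hα : 1 < α) {x y : ℝ} (hx : 0 ≤ x) (hy : 0 < y) :
    y ^ α + α * y ^ (α - 1) * (x - y) ≤ x ^ α := by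
  have hs : (-1 : ℝ) ≤ x / y - 1 := by
    have : 0 ≤ x / y := div_nonneg hx hy.le
    linarith
  have h := one_add_mul_self_le_rpow_one_add hs hα.le
  rw [show (1:ℝ) + (x / y - 1) = x / y by ring] at h
  have hyα : (0:ℝ) < y ^ α := Real.rpow_pos_of_pos hy α
  have h2 : (1 + α * (x / y - 1)) * y ^ α ≤ (x / y) ^ α * y ^ α :=
    mul_le_mul_of_nonneg_right h hyα.le
  have hdiv : (x / y) ^ α * y ^ α = x ^ α := by
    rw [Real.div_rpow hx hy.le, div_mul_cancel₀]
    exact (Real.rpow_pos_of_pos hy α).ne'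
  have hya : y ^ α = y ^ (α - 1) * y := by
    rw [← Real.rpow_add_one hy.ne' (α - 1)]; ring_nf
  calc y ^ α + α * y ^ (α - 1) * (x - y)
      = (1 + α * (x / y - 1)) * y ^ α := by
        rw [hya]; field_simp
    _ ≤ (x / y) ^ α * y ^ α := h2
    _ = x ^ α := hdiv

lemma stmt5_exists_pq {α d N c : ℝ} (hα : 1 < α) (hd : 0 < d) (hdN : d < N)
    (hc1 : N ^ (1 - α) < c) (hc2 : c < d ^ (1 - α)) :
    ∃ p q : ℝ, 0 < q ∧ q < p ∧ p ^ α * d + q ^ α * (N - d) = c ∧ p * d + q * (N - d) = 1 ∧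
      ∀ p' q' : ℝ, 0 ≤ q' → q' ≤ p' → p' ^ α * d + q' ^ α * (N - d) = c →
        p' * d + q' * (N - d) = 1 → p' = p ∧ q' = q := by
  have hN : 0 < N := hd.trans hdN
  have hNd : 0 < N - d := by linarith
  set P : ℝ → ℝ := fun q => (1 - q * (N - d)) / d with hP
  set f : ℝ → ℝ := fun q => (P q) ^ α * d + q ^ α * (N - d) with hf
  have hPd : ∀ q : ℝ, HasDerivAt P (-(N - d) / d) q := by
    intro q
    have : HasDerivAt (fun q : ℝ => (1 - q * (N - d)) / d) (-(N - d) / d) q := by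
      simpa using ((hasDerivAt_id q).mul_const (N - d)).const_sub 1 |>.div_const d
    exact this
  have hfd : ∀ q : ℝ, HasDerivAt f
      ((α * (P q) ^ (α - 1) * (-(N - d) / d)) * d + (α * q ^ (α - 1)) * (N - d)) q := by
    intro q
    have h1 : HasDerivAt (fun q => (P q) ^ α) (α * (P q) ^ (α - 1) * (-(N - d) / d)) q :=
      (Real.hasDerivAt_rpow_const (Or.inr hα.le)).comp q (hPd q)
    have h2 : HasDerivAt (fun q : ℝ => q ^ α) (α * q ^ (α - 1)) q :=
      Real.hasDerivAt_rpow_const (Or.inr hα.le)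
    exact (h1.mul_const d).add (h2.mul_const (N - d))
  have hcont : Continuous f :=
    continuous_iff_continuousAt.mpr fun q => (hfd q).continuousAt
  have hPmono : ∀ {q : ℝ}, q ≤ 1 / N → 1 / N ≤ P q := by
    intro q hq
    have hqN : q * N ≤ 1 := (le_div_iff₀ hN).mp hq
    rw [hP, le_div_iff₀ hd, div_mul_eq_mul_div, div_le_iff₀ hN]
    nlinarith [mul_nonneg hNd.le (sub_nonneg.mpr hqN)]
  have hanti : StrictAntiOn f (Set.Icc 0 (1 / N)) := by
    apply strictAntiOn_of_deriv_neg (convex_Icc _ _) hcont.continuousOn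
    intro q hq
    rw [interior_Icc] at hq
    obtain ⟨hq0, hq1⟩ := hq
    rw [(hfd q).deriv]
    have hqP : q < P q := lt_of_lt_of_le hq1 (hPmono hq1.le)
    have hPq : 0 < P q := hq0.trans hqP
    have hlt : q ^ (α - 1) < (P q) ^ (α - 1) :=
      Real.rpow_lt_rpow hq0.le hqP (by linarith)
    have hα0 : (0:ℝ) < α := by linarith
    rw [mul_assoc (α * (P q) ^ (α - 1)) (-(N - d) / d) d, div_mul_cancel₀ _ hd.ne']
    nlinarith [mul_pos (mul_pos hα0 hNd) (sub_pos.mpr hlt)]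
  have hf0 : f 0 = d ^ (1 - α) := by
    have h0 : (0:ℝ) ^ α = 0 := Real.zero_rpow (by positivity)
    simp only [hf, hP, zero_mul, sub_zero, h0]
    rw [one_div, ← Real.rpow_neg_one d, ← Real.rpow_mul hd.le,
      ← Real.rpow_add_one hd.ne', add_zero]
    congr 1; ring
  have hfN : f (1 / N) = N ^ (1 - α) := by
    have hPN : P (1 / N) = 1 / N := by
      rw [hP]; field_simp; ring
    simp only [hf, hPN]
    rw [one_div, ← Real.rpow_neg_one N, ← Real.rpow_mul hN.le]
    rw [show N ^ (-1 * α) * d + N ^ (-1 * α) * (N - d) = N ^ (-1 * α) * N by ring,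
      ← Real.rpow_add_one hN.ne']
    congr 1; ring
  have hlt : (0:ℝ) < 1 / N := by positivity
  obtain ⟨q, hqmem, hqc⟩ : ∃ q ∈ Set.Icc (0:ℝ) (1 / N), f q = c := by
    have hsub := intermediate_value_Icc' hlt.le hcont.continuousOn
    have hmem : c ∈ Set.Icc (f (1 / N)) (f 0) := by
      rw [hf0, hfN]; exact ⟨hc1.le, hc2.le⟩
    obtain ⟨q, hq, hq2⟩ := hsub hmem
    exact ⟨q, hq, hq2⟩
  obtain ⟨hq0', hq1'⟩ := hqmem
  have hq1 : q < 1 / N := by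
    rcases lt_or_eq_of_le hq1' with h | h
    · exact h
    · exfalso; rw [h, hfN] at hqc; linarith
  have hq0 : 0 < q := by
    rcases lt_or_eq_of_le hq0' with h | h
    · exact h
    · exfalso; rw [← h, hf0] at hqc; linarith
  refine ⟨P q, q, hq0, ?_, hqc, ?_, ?_⟩
  · exact lt_of_lt_of_le hq1 (hPmono hq1.le)
  · rw [hP]; field_simp; ring
  · intro p' q' hq'0 hq'p' heq1 heq2
    have hq'le : q' ≤ 1 / N := by
      rw [le_div_iff₀ hN]
      nlinarith [mul_le_mul_of_nonneg_right hq'p' hd.le]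
    have hp' : p' = P q' := by
      rw [hP, eq_div_iff hd.ne']; linarith
    have hfq' : f q' = c := by
      simp only [hf]; rw [← hp']; exact heq1
    have hqq : q' = q := hanti.injOn ⟨hq'0, hq'le⟩ ⟨hq0', hq1'⟩ (by rw [hfq', hqc])
    exact ⟨by rw [hp', hqq], hqq⟩

set_option maxHeartbeats 1000000 in
theorem stmt5 (n : ℕ) (k α : ℝ) (hα : 1 < α) (hk0 : 0 ≤ k) (hk : k < (n : ℝ) - 1)
    (D : Fin (2 ^ n) → Bool)
    (hD0 : 0 < (Finset.univ.filter (fun x => D x = true)).card)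
    (hDk : ((Finset.univ.filter (fun x => D x = true)).card : ℝ) < (2 : ℝ) ^ k) :
    ∃ p q : ℝ,
      (0 ≤ q ∧ q ≤ p ∧
        p ^ α * ((Finset.univ.filter (fun x => D x = true)).card : ℝ)
          + q ^ α * ((2 : ℝ) ^ n - ((Finset.univ.filter (fun x => D x = true)).card : ℝ))
          = (2 : ℝ) ^ (-(α - 1) * k) ∧
        p * ((Finset.univ.filter (fun x => D x = true)).card : ℝ)
          + q * ((2 : ℝ) ^ n - ((Finset.univ.filter (fun x => D x = true)).card : ℝ)) = 1) ∧
      (∀ p' q' : ℝ,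
        (0 ≤ q' ∧ q' ≤ p' ∧
          p' ^ α * ((Finset.univ.filter (fun x => D x = true)).card : ℝ)
            + q' ^ α * ((2 : ℝ) ^ n - ((Finset.univ.filter (fun x => D x = true)).card : ℝ))
            = (2 : ℝ) ^ (-(α - 1) * k) ∧
          p' * ((Finset.univ.filter (fun x => D x = true)).card : ℝ)
            + q' * ((2 : ℝ) ^ n - ((Finset.univ.filter (fun x => D x = true)).card : ℝ)) = 1)
        → p' = p ∧ q' = q) ∧
      IsGreatest {v : ℝ | ∃ Y : Fin (2 ^ n) → ℝ, (∀ x, 0 ≤ Y x) ∧ (∑ x, Y x = 1) ∧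
          (∑ x, Y x ^ α ≤ (2 : ℝ) ^ (-(α - 1) * k)) ∧
          v = ∑ x, Y x * (if D x then (1 : ℝ) else 0)}
        (p * ((Finset.univ.filter (fun x => D x = true)).card : ℝ)) := by
  have hA0 : (0:ℝ) < α := by linarith
  set S := Finset.univ.filter (fun x : Fin (2 ^ n) => D x = true) with hS
  set d : ℝ := (S.card : ℝ) with hdd
  set N : ℝ := (2:ℝ) ^ n with hNN
  set c : ℝ := (2:ℝ) ^ (-(α - 1) * k) with hcc
  set Sc := Finset.univ.filter (fun x : Fin (2 ^ n) => ¬ D x = true) with hSc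
  have hd : 0 < d := by rw [hdd]; exact_mod_cast hD0
  have hkn : k < (n : ℝ) := by linarith
  have hNr : N = (2:ℝ) ^ ((n : ℝ)) := by rw [hNN, Real.rpow_natCast]
  have hdN : d < N := by
    refine hDk.trans ?_
    rw [hNr]
    exact Real.rpow_lt_rpow_of_exponent_lt one_lt_two hkn
  have hc1 : N ^ (1 - α) < c := by
    rw [hNr, ← Real.rpow_mul (by norm_num), hcc]
    exact Real.rpow_lt_rpow_of_exponent_lt one_lt_two (by nlinarith)
  have hc2 : c < d ^ (1 - α) := by
    have h1 : ((2:ℝ) ^ k) ^ (1 - α) = c := by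
      rw [← Real.rpow_mul (by norm_num : (0:ℝ) ≤ 2), hcc]
      congr 1; ring
    rw [← h1]
    exact Real.rpow_lt_rpow_of_neg hd hDk (by linarith)
  obtain ⟨p, q, hq0, hqp, he1, he2, huniq⟩ := stmt5_exists_pq hα hd hdN hc1 hc2
  have hp0 : 0 < p := hq0.trans hqp
  have hcardsum : S.card + Sc.card = 2 ^ n := by
    rw [hS, hSc, Finset.card_filter_add_card_filter_not]
    simp
  have hScard : (Sc.card : ℝ) = N - d := by
    have h : (S.card : ℝ) + (Sc.card : ℝ) = ((2:ℝ)) ^ n := by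
      exact_mod_cast hcardsum
    rw [hdd, hNN]; linarith
  have hsplit0 : ∀ g : Fin (2 ^ n) → ℝ, ∑ x ∈ S, g x + ∑ x ∈ Sc, g x = ∑ x, g x := by
    intro g
    rw [hS, hSc]
    exact Finset.sum_filter_add_sum_filter_not _ _ _
  have hsum : ∀ a b : ℝ, ∑ x, (if D x then a else b) = a * d + b * (N - d) := by
    intro a b
    have h1 : ∑ x ∈ S, (if D x then a else b) = d * a := by
      rw [Finset.sum_congr rfl (fun x hx => ?_), Finset.sum_const, nsmul_eq_mul, ← hdd]
      rw [hS, Finset.mem_filter] at hx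
      simp [hx.2]
    have h2 : ∑ x ∈ Sc, (if D x then a else b) = (N - d) * b := by
      rw [Finset.sum_congr rfl (fun x hx => ?_), Finset.sum_const, nsmul_eq_mul, hScard]
      rw [hSc, Finset.mem_filter] at hx
      simp [hx.2]
    rw [← hsplit0, h1, h2]; ring
  clear_value S Sc d N c
  refine ⟨p, q, ⟨hq0.le, hqp.le, he1, he2⟩, ?_, ?_, ?_⟩
  · rintro p' q' ⟨h1, h2, h3, h4⟩
    exact huniq p' q' h1 h2 h3 h4
  · -- membership: the extremal distribution
    refine ⟨fun x => if D x then p else q, ?_, ?_, ?_, ?_⟩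
    · intro x
      by_cases h : D x <;> simp [h, hp0.le, hq0.le]
    · rw [hsum p q]; exact he2
    · have h : ∑ x, (if D x then p else q) ^ α = ∑ x, (if D x then p ^ α else q ^ α) :=
        Finset.sum_congr rfl (fun x _ => by by_cases h : D x <;> simp [h])
      rw [h, hsum (p ^ α) (q ^ α)]
      exact le_of_eq he1
    · have h : ∀ x, (if D x then p else q) * (if D x then (1:ℝ) else 0)
          = (if D x then p else 0) := fun x => by by_cases h : D x <;> simp [h]
      rw [Finset.sum_congr rfl (fun x _ => h x), hsum p 0]
      ring
  · -- upper bound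
    rintro v ⟨Y, hY0, hY1, hYa, hveq⟩
    set s := ∑ x ∈ S, Y x with hs
    clear_value s
    have hv : v = s := by
      rw [hveq, hs, hS, Finset.sum_filter]
      all_goals exact Finset.sum_congr rfl (fun x _ => by by_cases h : D x <;> simp [h])
    have hst : s + ∑ x ∈ Sc, Y x = 1 := by
      rw [hs]; exact (hsplit0 Y).trans hY1
    set F : Fin (2 ^ n) → ℝ := fun x =>
      (if D x then p else q) ^ α
        + α * (if D x then p else q) ^ (α - 1) * (Y x - (if D x then p else q)) with hF
    clear_value F
    have htan : ∑ x, F x ≤ c := by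
      refine le_trans (Finset.sum_le_sum fun x _ => ?_) hYa
      have hw : 0 < (if D x then p else q) := by
        by_cases h : D x <;> simp [h, hp0, hq0]
      rw [hF]
      exact stmt5_tangent hα (hY0 x) hw
    have hF1 : ∑ x ∈ S, F x = d * p ^ α + α * p ^ (α - 1) * (s - d * p) := by
      have hcong : ∀ x ∈ S, F x = p ^ α + α * p ^ (α - 1) * (Y x - p) := by
        intro x hx
        rw [hS, Finset.mem_filter] at hx
        simp [hF, hx.2]
      rw [Finset.sum_congr rfl hcong, Finset.sum_add_distrib, Finset.sum_const,
        ← Finset.mul_sum, Finset.sum_sub_distrib, Finset.sum_const,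
        nsmul_eq_mul, nsmul_eq_mul, ← hdd, ← hs]
      try ring
    have hF2 : ∑ x ∈ Sc, F x
        = (N - d) * q ^ α + α * q ^ (α - 1) * ((1 - s) - (N - d) * q) := by
      have hcong : ∀ x ∈ Sc, F x = q ^ α + α * q ^ (α - 1) * (Y x - q) := by
        intro x hx
        rw [hSc, Finset.mem_filter] at hx
        simp [hF, hx.2]
      rw [Finset.sum_congr rfl hcong, Finset.sum_add_distrib, Finset.sum_const,
        ← Finset.mul_sum, Finset.sum_sub_distrib, Finset.sum_const,
        nsmul_eq_mul, nsmul_eq_mul, hScard]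
      have ht : ∑ x ∈ Sc, Y x = 1 - s := by linarith
      rw [ht]; try ring
    have hkey : α * (p ^ (α - 1) * (s - d * p) + q ^ (α - 1) * ((1 - s) - (N - d) * q)) ≤ 0 := by
      have h : ∑ x ∈ S, F x + ∑ x ∈ Sc, F x ≤ c := by rw [hsplit0]; exact htan
      rw [hF1, hF2] at h
      nlinarith [he1]
    have h6 : p ^ (α - 1) * (s - d * p) + q ^ (α - 1) * ((1 - s) - (N - d) * q) ≤ 0 := by
      nlinarith
    have hq2 : (N - d) * q = 1 - p * d := by linear_combination he2
    have hBe : q ^ (α - 1) * ((N - d) * q) = q ^ (α - 1) * (1 - p * d) := by rw [hq2]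
    have hAB : q ^ (α - 1) < p ^ (α - 1) :=
      Real.rpow_lt_rpow hq0.le hqp (by linarith)
    rw [hv]
    by_contra hcon
    push_neg at hcon
    nlinarith [h6, hBe, mul_pos (sub_pos.mpr hAB) (sub_pos.mpr hcon)]
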